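/- Let Λ be a finitely-aligned k-graph, v ∈ Λ⁰, 𝓕 ⊆ vΛ a finite exhaustive set, n ∈ ℕ^k with n ≥ ⋁_{μ∈𝓕} d(μ), m ≤ n, and (λ,F) a pair with λ ∈ vΛ, d(λ) ≥ m componentwise with d(λ)_i = m_i whenever n_i > m_i, F ⊆ s(λ)Λ finite such that D_λ \ D_{λF} ≠ ∅ and (λ,F) satisfies condition K(i) for every i with n_i > m_i. Then there exists η ∈ 𝓕 such that λ extends η (i.e., λ = η λ' for some λ'). -/

import Mathlib

open scoped ENNReal ComplexConjugate ZeroAtInfty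
open Classical

/-- A `k`-graph: a countable category `Λ` with degree functor `d : Λ → ℕ^k`
satisfying the unique factorisation property.  Vertices are the objects,
`P` is the set of morphisms (paths), `comp` is composition (meaningful when
`s a = r b`). -/
structure KGraph (k : ℕ) where
  V : Type
  P : Type
  r : P → V
  s : P → V
  d : P → Fin k → ℕ
  comp : P → P → P
  r_comp : ∀ a b, s a = r b → r (comp a b) = r a
  s_comp : ∀ a b, s a = r b → s (comp a b) = s b
  d_comp : ∀ a b, s a = r b → d (comp a b) = d a + d b
  comp_assoc : ∀ a b c, s a = r b → s b = r c →
    comp (comp a b) c = comp a (comp b c)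
  vtx : V → P
  r_vtx : ∀ v, r (vtx v) = v
  s_vtx : ∀ v, s (vtx v) = v
  d_vtx : ∀ v, d (vtx v) = 0
  comp_vtx : ∀ a, comp a (vtx (s a)) = a
  vtx_comp : ∀ a, comp (vtx (r a)) a = a
  /-- unique factorisation property -/
  factor : ∀ (lam : P) (m n : Fin k → ℕ), d lam = m + n →
    ∃! mn : P × P, s mn.1 = r mn.2 ∧ d mn.1 = m ∧ d mn.2 = n ∧
      lam = comp mn.1 mn.2
  countableP : Countable P

namespace KGraph

variable {k : ℕ} (G : KGraph k)

/-- `Λ^min(λ,μ) = {(α,β) : λα = μβ, d(λα) = d(λ) ∨ d(μ)}`. -/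
def Lmin (lam mu : G.P) : Set (G.P × G.P) :=
  {p | G.s lam = G.r p.1 ∧ G.s mu = G.r p.2 ∧
    G.comp lam p.1 = G.comp mu p.2 ∧
    G.d lam + G.d p.1 = G.d lam ⊔ G.d mu}

def FinitelyAligned : Prop := ∀ lam mu : G.P, (G.Lmin lam mu).Finite

/-- `Ext(λ;E) = {α : (α,β) ∈ Λ^min(λ,ν) for some ν ∈ E, β}`. -/
def Ext (lam : G.P) (E : Set G.P) : Set G.P :=
  {a | ∃ ν ∈ E, ∃ b, (a, b) ∈ G.Lmin lam ν}

/-- `E ⊆ vΛ` is exhaustive if every `μ ∈ vΛ` has a minimal common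
extension with some element of `E`. -/
def Exhaustive (v : G.V) (E : Set G.P) : Prop :=
  (∀ lam ∈ E, G.r lam = v) ∧
    ∀ mu, G.r mu = v → ∃ lam ∈ E, (G.Lmin lam mu).Nonempty

/-- `λ` extends `μ`: `λ = μλ'` for some `λ'`. -/
def Extends (lam mu : G.P) : Prop :=
  ∃ lam', G.s mu = G.r lam' ∧ lam = G.comp mu lam'

/-- A graph morphism `x : Ω_{k,m} → Λ`: `deg = m ∈ (ℕ∪{∞})^k` and
`seg p q = x(p,q)` for `p ≤ q ≤ m`. -/
structure GM (G : KGraph k) where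
  deg : Fin k → ℕ∞
  seg : (Fin k → ℕ) → (Fin k → ℕ) → G.P
  d_seg : ∀ p q : Fin k → ℕ, p ≤ q → (∀ i, (q i : ℕ∞) ≤ deg i) →
    G.d (seg p q) = q - p
  comp_seg : ∀ p q r : Fin k → ℕ, p ≤ q → q ≤ r →
    (∀ i, (r i : ℕ∞) ≤ deg i) → seg p r = G.comp (seg p q) (seg q r)
  s_seg : ∀ p q r : Fin k → ℕ, p ≤ q → q ≤ r →
    (∀ i, (r i : ℕ∞) ≤ deg i) → G.s (seg p q) = G.r (seg q r)

/-- The boundary condition on a graph morphism. -/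
def IsBoundary (x : GM G) : Prop :=
  ∀ n : Fin k → ℕ, (∀ i, (n i : ℕ∞) ≤ x.deg i) →
    ∀ E : Set G.P, E.Finite → G.Exhaustive (G.r (x.seg n n)) E →
      ∃ lam ∈ E, (∀ i, ((n i + G.d lam i : ℕ) : ℕ∞) ≤ x.deg i) ∧
        x.seg n (n + G.d lam) = lam

/-- The boundary-path space `∂Λ`. -/
def BPath (G : KGraph k) := {x : GM G // G.IsBoundary x}

/-- `D_λ = {x ∈ ∂Λ : x(0,d(λ)) = λ}`. -/
def DSet (lam : G.P) : Set (BPath G) :=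
  {x | (∀ i, (G.d lam i : ℕ∞) ≤ x.1.deg i) ∧ x.1.seg 0 (G.d lam) = lam}

/-- `D_{λF} = ⋃_{ν ∈ F} D_{λν}`. -/
def DFSet (lam : G.P) (F : Set G.P) : Set (BPath G) :=
  ⋃ ν ∈ F, G.DSet (G.comp lam ν)

/-- The basic open sets `D_λ \ D_{λF}` of the topology on `∂Λ`. -/
def basicSets : Set (Set (BPath G)) :=
  {U | ∃ (lam : G.P) (F : Set G.P), F.Finite ∧
    (∀ ν ∈ F, G.r ν = G.s lam) ∧ U = G.DSet lam \ G.DFSet lam F}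

instance : TopologicalSpace (BPath G) :=
  TopologicalSpace.generateFrom (G.basicSets)

/-- `∂Λ^{≥n}`. -/
def geSet (n : Fin k → ℕ) : Set (BPath G) :=
  {x | ∀ i, (n i : ℕ∞) ≤ x.1.deg i}

/-- `ShiftEq n x y` says `d(x) ≥ n` and `σ_n(x) = y`. -/
def ShiftEq (n : Fin k → ℕ) (x y : BPath G) : Prop :=
  x ∈ G.geSet n ∧ (∀ i, y.1.deg i = x.1.deg i - (n i : ℕ∞)) ∧
    ∀ p q : Fin k → ℕ, p ≤ q → (∀ i, (q i : ℕ∞) ≤ y.1.deg i) →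
      y.1.seg p q = x.1.seg (p + n) (q + n)

/-- `σ : ∂Λ^{≥n} → ∂Λ` is the shift map `σ_n`. -/
def IsShift (n : Fin k → ℕ) (σ : G.geSet n → BPath G) : Prop :=
  ∀ x, G.ShiftEq n x.1 (σ x)

/-- Condition `K(i)` for the pair `(λ,F)`. -/
def ConditionK (i : Fin k) (lam : G.P) (F : Set G.P) : Prop :=
  ∀ mu, G.r mu = G.s lam → 1 ≤ G.d mu i →
    ∃ ν ∈ F, G.DSet mu ⊆ G.DSet ν

/-- Extension by zero of a function on `∂Λ^{≥n}` to `∂Λ`. -/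
noncomputable def extFun {n : Fin k → ℕ} (f : G.geSet n → ℂ) :
    BPath G → ℂ :=
  fun x => if h : x ∈ G.geSet n then f ⟨x, h⟩ else 0

/-- The `C₀(∂Λ)`-valued inner product `⟨f,g⟩_n(x) = Σ_{σ_n(y)=x} conj(f y) g y`. -/
noncomputable def innerP (n : Fin k → ℕ) (f g : BPath G → ℂ) :
    BPath G → ℂ :=
  fun x => ∑' y : {y : BPath G // G.ShiftEq n y x}, conj (f y) * g y

/-- Characteristic function `χ_{D_λ \ D_{λF}}`. -/
noncomputable def chiD (lam : G.P) (F : Set G.P) : BPath G → ℂ :=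
  fun x => if x ∈ G.DSet lam \ G.DFSet lam F then 1 else 0

end KGraph

private lemma enat_le_sub_iff {a c : ℕ} {b : ℕ∞} (h : (c : ℕ∞) ≤ b) :
    (a : ℕ∞) ≤ b - c ↔ ((a + c : ℕ) : ℕ∞) ≤ b := by
  induction b using ENat.recTopCoe with
  | top => simp
  | coe nn =>
    have hc : c ≤ nn := by exact_mod_cast h
    rw [← ENat.coe_sub]
    constructor
    · intro h'
      have : a ≤ nn - c := by exact_mod_cast h'
      exact_mod_cast (Nat.le_sub_iff_add_le hc).1 this
    · intro h'
      have : a + c ≤ nn := by exact_mod_cast h'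
      exact_mod_cast (Nat.le_sub_iff_add_le hc).2 this

namespace KGraph

variable {k : ℕ} (G : KGraph k)

/-- The shift `σ_p x` of a graph morphism `x` with `p ≤ deg x`. -/
noncomputable def shiftGM (x : G.GM) (p : Fin k → ℕ)
    (hp : ∀ i, (p i : ℕ∞) ≤ x.deg i) : G.GM where
  deg i := x.deg i - p i
  seg a b := x.seg (a + p) (b + p)
  d_seg a b hab hb := by
    have hb' : ∀ i, (((b + p) i : ℕ) : ℕ∞) ≤ x.deg i :=
      fun i => (enat_le_sub_iff (hp i)).1 (hb i)
    rw [x.d_seg _ _ (add_le_add_left hab p) hb']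
    funext i
    show b i + p i - (a i + p i) = b i - a i
    omega
  comp_seg a b c hab hbc hc := by
    have hc' : ∀ i, (((c + p) i : ℕ) : ℕ∞) ≤ x.deg i :=
      fun i => (enat_le_sub_iff (hp i)).1 (hc i)
    exact x.comp_seg _ _ _ (add_le_add_left hab p) (add_le_add_left hbc p) hc'
  s_seg a b c hab hbc hc := by
    have hc' : ∀ i, (((c + p) i : ℕ) : ℕ∞) ≤ x.deg i :=
      fun i => (enat_le_sub_iff (hp i)).1 (hc i)
    exact x.s_seg _ _ _ (add_le_add_left hab p) (add_le_add_left hbc p) hc'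

lemma shift_boundary (x : G.GM) (hx : G.IsBoundary x) (p : Fin k → ℕ)
    (hp : ∀ i, (p i : ℕ∞) ≤ x.deg i) : G.IsBoundary (G.shiftGM x p hp) := by
  intro nn hnn E hE hex
  have hnn' : ∀ i, (((nn + p) i : ℕ) : ℕ∞) ≤ x.deg i :=
    fun i => (enat_le_sub_iff (hp i)).1 (hnn i)
  obtain ⟨lam, hlamE, hdeg, hseg⟩ := hx (nn + p) hnn' E hE hex
  refine ⟨lam, hlamE, fun i => ?_, ?_⟩
  · rw [show (shiftGM G x p hp).deg i = x.deg i - p i from rfl,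
      enat_le_sub_iff (hp i)]
    have := hdeg i
    rw [show (nn + p) i + G.d lam i = nn i + G.d lam i + p i from by
      show nn i + p i + G.d lam i = _; omega] at this
    exact this
  · show x.seg (nn + p) (nn + G.d lam + p) = lam
    rw [show nn + G.d lam + p = (nn + p) + G.d lam from by
      funext i; show nn i + G.d lam i + p i = nn i + p i + G.d lam i; omega]
    exact hseg

end KGraph

/-- Lemma 4.11 of the paper: if `𝓕 ⊆ vΛ` is finite exhaustive,
`n ≥ ⋁ d(𝓕)`, `m ≤ n`, and `(λ,F)` is a pair with `λ ∈ vΛ`, `d(λ) ≥ m`,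
`d(λ)_i = m_i` and condition `K(i)` whenever `n_i > m_i`, `F ⊆ s(λ)Λ`
finite, and `D_λ \ D_{λF} ≠ ∅`, then `λ` extends some `η ∈ 𝓕`. -/
theorem stmt11 {k : ℕ} (G : KGraph k) (hFA : G.FinitelyAligned)
    (v : G.V) (𝓕 : Set G.P) (h𝓕fin : 𝓕.Finite) (h𝓕ex : G.Exhaustive v 𝓕)
    (n m : Fin k → ℕ) (hn : ∀ mu ∈ 𝓕, G.d mu ≤ n) (hmn : m ≤ n)
    (lam : G.P) (hr : G.r lam = v) (F : Set G.P) (hFfin : F.Finite)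
    (hFsub : ∀ ν ∈ F, G.r ν = G.s lam) (hdm : m ≤ G.d lam)
    (hdi : ∀ i, m i < n i → G.d lam i = m i ∧ G.ConditionK i lam F)
    (hne : (G.DSet lam \ G.DFSet lam F).Nonempty) :
    ∃ η ∈ 𝓕, G.Extends lam η := by
  obtain ⟨x, hxlam, hxF⟩ := hne
  obtain ⟨hxdeg, hxseg⟩ := hxlam
  -- the path x starts at v
  have h0d : (0 : Fin k → ℕ) ≤ G.d lam := fun i => Nat.zero_le _
  have hr0 : G.r (x.1.seg 0 0) = v := by
    have hc := x.1.comp_seg 0 0 (G.d lam) le_rfl h0d hxdeg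
    have hs := x.1.s_seg 0 0 (G.d lam) le_rfl h0d hxdeg
    have := G.r_comp _ _ hs
    rw [← hc, hxseg] at this
    rw [← this, hr]
  -- apply the boundary condition at 0 with the exhaustive set 𝓕
  have hex0 : G.Exhaustive (G.r (x.1.seg 0 0)) 𝓕 := hr0 ▸ h𝓕ex
  obtain ⟨η, hη𝓕, hηdeg, hηseg⟩ :=
    x.2 0 (fun i => by simp) 𝓕 h𝓕fin hex0
  have hηdeg' : ∀ i, (G.d η i : ℕ∞) ≤ x.1.deg i := by
    intro i; have := hηdeg i; simpa using this
  rw [show (0 : Fin k → ℕ) + G.d η = G.d η from by funext i; simp] at hηseg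
  refine ⟨η, hη𝓕, ?_⟩
  -- it suffices to show d η ≤ d λ
  by_cases hle : G.d η ≤ G.d lam
  · refine ⟨x.1.seg (G.d η) (G.d lam), ?_, ?_⟩
    · have := x.1.s_seg 0 (G.d η) (G.d lam) (fun i => Nat.zero_le _) hle hxdeg
      rw [hηseg] at this; exact this
    · have := x.1.comp_seg 0 (G.d η) (G.d lam) (fun i => Nat.zero_le _) hle hxdeg
      rw [hηseg, hxseg] at this; exact this
  · -- otherwise derive a contradiction using condition K
    exfalso
    obtain ⟨i, hi⟩ : ∃ i, G.d lam i < G.d η i := by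
      by_contra hcon
      push_neg at hcon
      exact hle fun i => le_of_not_gt fun h => absurd (hcon i) (not_le.2 h)
    have hmni : m i < n i := lt_of_le_of_lt (hdm i) (lt_of_lt_of_le hi (hn η hη𝓕 i))
    have hK : G.ConditionK i lam F := (hdi i hmni).2
    -- the path μ = x(d λ, d λ ⊔ d η)
    set N : Fin k → ℕ := G.d lam ⊔ G.d η with hN
    have hlN : G.d lam ≤ N := le_sup_left
    have hNdeg : ∀ j, (N j : ℕ∞) ≤ x.1.deg j := by
      intro j
      have : N j = max (G.d lam j) (G.d η j) := rfl
      rw [this]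
      rcases le_total (G.d lam j) (G.d η j) with h | h
      · rw [max_eq_right h]; exact hηdeg' j
      · rw [max_eq_left h]; exact hxdeg j
    set μ := x.1.seg (G.d lam) N with hμ
    have hrμ : G.r μ = G.s lam := by
      have := x.1.s_seg 0 (G.d lam) N h0d hlN hNdeg
      rw [hxseg] at this; exact this.symm
    have hdμ : G.d μ = N - G.d lam := x.1.d_seg _ _ hlN hNdeg
    have hdμi : 1 ≤ G.d μ i := by
      rw [hdμ]
      show 1 ≤ N i - G.d lam i
      have : N i = max (G.d lam i) (G.d η i) := rfl
      omega
    obtain ⟨ν, hνF, hνsub⟩ := hK μ hrμ hdμi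
    -- the shifted boundary path y = σ_{d λ}(x)
    set y : G.BPath := ⟨G.shiftGM x.1 (G.d lam) hxdeg,
      G.shift_boundary x.1 x.2 (G.d lam) hxdeg⟩ with hy
    have hyμ : y ∈ G.DSet μ := by
      constructor
      · intro j
        show (G.d μ j : ℕ∞) ≤ x.1.deg j - G.d lam j
        rw [enat_le_sub_iff (hxdeg j), hdμ]
        have : N j - G.d lam j + G.d lam j = N j := Nat.sub_add_cancel (hlN j)
        rw [show (N - G.d lam) j = N j - G.d lam j from rfl, this]
        exact hNdeg j
      · show x.1.seg (0 + G.d lam) (G.d μ + G.d lam) = μ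
        rw [show (0 : Fin k → ℕ) + G.d lam = G.d lam from by funext j; simp,
          show G.d μ + G.d lam = N from by
            funext j; rw [hdμ]; show N j - G.d lam j + G.d lam j = N j
            exact Nat.sub_add_cancel (hlN j)]
    have hyν : y ∈ G.DSet ν := hνsub hyμ
    obtain ⟨hyνdeg, hyνseg⟩ := hyν
    -- hence x ∈ D_{λν} ⊆ D_{λF}, contradiction
    have hslamν : G.s lam = G.r ν := (hFsub ν hνF).symm
    have hdcomp : G.d (G.comp lam ν) = G.d lam + G.d ν := G.d_comp _ _ hslamν
    have hdeglamν : ∀ j, ((G.d lam j + G.d ν j : ℕ) : ℕ∞) ≤ x.1.deg j := by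
      intro j
      have := hyνdeg j
      rw [show y.1.deg j = x.1.deg j - G.d lam j from rfl,
        enat_le_sub_iff (hxdeg j)] at this
      rw [show G.d lam j + G.d ν j = G.d ν j + G.d lam j from by omega]
      exact this
    have hlamν : G.d lam ≤ G.d lam + G.d ν := fun j => Nat.le_add_right _ _
    have hseglamν : x.1.seg 0 (G.d lam + G.d ν) = G.comp lam ν := by
      have hc := x.1.comp_seg 0 (G.d lam) (G.d lam + G.d ν) h0d hlamν
        (fun j => hdeglamν j)
      rw [hxseg] at hc
      have : x.1.seg (G.d lam) (G.d lam + G.d ν) = ν := by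
        have h2 : x.1.seg ((0 : Fin k → ℕ) + G.d lam) (G.d ν + G.d lam) = ν :=
          hyνseg
        rw [show (0 : Fin k → ℕ) + G.d lam = G.d lam from by funext j; simp,
          show G.d ν + G.d lam = G.d lam + G.d ν from by
            funext j; show G.d ν j + G.d lam j = G.d lam j + G.d ν j; omega]
          at h2
        exact h2
      rw [this] at hc
      exact hc
    apply hxF
    refine Set.mem_biUnion hνF ?_
    constructor
    · intro j; rw [hdcomp]; exact hdeglamν j
    · rw [hdcomp]; exact hseglamν
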